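/- arXiv:2304.05145 — 2 statements merged into one kernel-verified Lean document; each statement's English description precedes it below -/
import Mathlib

section
/- Let m and k be positive integers, let a be the k-binomial decomposition of m, let b be a nonempty strictly decreasing sequence of nonnegative integers, and let c be a (possibly empty) strictly decreasing sequence of nonnegative integers. Assume B(a,k) = B(b,k) + B(c,k−1) and b ≥_lex a−1. Then for every integer i ≥ 0, B(a, k−i) ≤ B(b, k−i) + B(c, k−i−1). -/
/-- Generalized binomial coefficient `C(n, j)`:
`C(n,j) = n(n-1)⋯(n-j+1)/j!` for `j ≥ 0` and `C(n,j) = 0` for `j < 0`. -/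
def C (n j : ℤ) : ℤ :=
  if 0 ≤ j then
    if 0 ≤ n then ((n.toNat.choose j.toNat : ℕ) : ℤ)
    else (-1) ^ j.toNat * (((j - n - 1).toNat.choose j.toNat : ℕ) : ℤ)
  else 0

/-- `B a k = Σ_l C(a_l, k - l)`. -/
def B : List ℤ → ℤ → ℤ
  | [], _ => 0
  | x :: xs, k => C x k + B xs (k - 1)

/-- `a` has the shape of a `k`-binomial decomposition: strictly decreasing,
length at most `k`, and `a_i ≥ k - i` for every index. -/
def IsKBinomSeq (k : ℕ) (a : List ℤ) : Prop :=
  a.Chain' (· > ·) ∧ a.length ≤ k ∧ ∀ i < a.length, (k : ℤ) - i ≤ a.getD i 0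

/-- `a` is the `k`-binomial decomposition of `m`. -/
def IsKBinom (k : ℕ) (m : ℤ) (a : List ℤ) : Prop :=
  IsKBinomSeq k a ∧ m = B a (k : ℤ)

/-- Non-strict lexicographic order on integer sequences. -/
def lexLE (x y : List ℤ) : Prop := x = y ∨ List.Lex (· < ·) x y

/-! ### Basic numeric lemmas -/

lemma C_of_neg {j : ℤ} (hj : j < 0) (m : ℤ) : C m j = 0 := by
  simp [C, not_le.2 hj]

lemma C_ofNat (x j : ℕ) : C (x : ℤ) (j : ℤ) = (x.choose j : ℤ) := by
  simp [C, Int.toNat_natCast]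

lemma C_nonneg {m : ℤ} (hm : 0 ≤ m) (j : ℤ) : 0 ≤ C m j := by
  unfold C
  split_ifs with h1 h2
  · positivity
  · omega

lemma B_nil (j : ℤ) : B [] j = 0 := rfl

lemma B_cons (x : ℤ) (xs : List ℤ) (j : ℤ) : B (x :: xs) j = C x j + B xs (j - 1) := rfl

lemma B_nonneg {l : List ℤ} (hl : ∀ x ∈ l, 0 ≤ x) (j : ℤ) : 0 ≤ B l j := by
  induction l generalizing j with
  | nil => simp [B_nil]
  | cons x xs ih =>
    rw [B_cons]
    have h1 : 0 ≤ C x j := C_nonneg (hl x (by simp)) j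
    have h2 : 0 ≤ B xs (j - 1) := ih (fun y hy => hl y (by simp [hy])) _
    omega

lemma B_of_neg {l : List ℤ} {j : ℤ} (hj : j < 0) : B l j = 0 := by
  induction l generalizing j with
  | nil => rfl
  | cons x xs ih => rw [B_cons, C_of_neg hj, ih (by omega)]; ring

/-- Pascal's rule for `C` with top entry `≥ 1`. -/
lemma C_pascal {m : ℤ} (hm : 1 ≤ m) (j : ℤ) : C m j = C (m - 1) j + C (m - 1) (j - 1) := by
  rcases lt_trichotomy j 0 with hj | hj | hj
  · rw [C_of_neg hj, C_of_neg hj, C_of_neg (by omega)]; ring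
  · subst hj
    have h0 : C m 0 = 1 := by simp [C, show (0:ℤ) ≤ m by omega]
    have h1 : C (m-1) 0 = 1 := by simp [C, show (0:ℤ) ≤ m - 1 by omega]
    rw [h0, h1, C_of_neg (by omega)]; ring
  · -- j ≥ 1, m ≥ 1 : reduce to Nat.choose
    obtain ⟨p, rfl⟩ : ∃ p : ℕ, m = (p : ℤ) + 1 := ⟨(m-1).toNat, by omega⟩
    obtain ⟨q, rfl⟩ : ∃ q : ℕ, j = (q : ℤ) + 1 := ⟨(j-1).toNat, by omega⟩
    have e1 : ((p : ℤ) + 1) = ((p + 1 : ℕ) : ℤ) := by push_cast; ring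
    have e2 : ((q : ℤ) + 1) = ((q + 1 : ℕ) : ℤ) := by push_cast; ring
    rw [e1, e2, C_ofNat, show ((p+1:ℕ):ℤ) - 1 = (p : ℤ) by push_cast; ring,
      show ((q+1:ℕ):ℤ) - 1 = (q : ℤ) by push_cast; ring, C_ofNat, C_ofNat,
      Nat.choose_succ_succ']
    push_cast; ring

/-- Pascal's rule for `B` over lists with entries `≥ 1`. -/
lemma B_pascal {l : List ℤ} (hl : ∀ x ∈ l, 1 ≤ x) (j : ℤ) :
    B l j = B (l.map (· - 1)) j + B (l.map (· - 1)) (j - 1) := by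
  induction l generalizing j with
  | nil => simp [B_nil]
  | cons x xs ih =>
    simp only [List.map_cons, B_cons]
    rw [C_pascal (hl x (by simp)), ih (fun y hy => hl y (by simp [hy]))]
    ring


attribute [-instance] instDecidableEqFin

/-! ### Cascade families -/

open Finset
open scoped FinsetFamily

namespace KKproof

variable {n : ℕ}

/-- The cascade family of a list at level `r`. -/
def casc : List (Fin n) → ℕ → Finset (Finset (Fin n))
  | [], _ => ∅
  | _ :: _, 0 => {∅}
  | x :: xs, r + 1 => (Finset.Iio x).powersetCard (r + 1) ∪ (casc xs r).image (insert x)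

lemma casc_nil (r : ℕ) : casc ([] : List (Fin n)) r = ∅ := rfl

lemma casc_cons_zero (x : Fin n) (xs : List (Fin n)) : casc (x :: xs) 0 = {∅} := rfl

lemma casc_cons_succ (x : Fin n) (xs : List (Fin n)) (r : ℕ) :
    casc (x :: xs) (r + 1) = (Finset.Iio x).powersetCard (r + 1) ∪ (casc xs r).image (insert x) :=
  rfl

lemma head_gt {x : Fin n} {xs : List (Fin n)} (h : (x :: xs).Chain' (· > ·)) :
    ∀ z ∈ xs, z < x := by
  change List.IsChain _ _ at h
  rw [List.isChain_iff_pairwise] at h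
  exact fun z hz => (List.pairwise_cons.1 h).1 z hz

lemma tail_sd {x : Fin n} {xs : List (Fin n)} (h : (x :: xs).Chain' (· > ·)) :
    xs.Chain' (· > ·) := h.tail

/-- Every element of a set in the cascade of `l` is less than any upper bound for `l`. -/
lemma mem_casc_lt {l : List (Fin n)} (hl : l.Chain' (· > ·)) {v : Fin n} (hv : ∀ x ∈ l, x < v) :
    ∀ r, ∀ S ∈ casc l r, ∀ y ∈ S, y < v := by
  induction l with
  | nil => intro r S hS; rw [casc_nil] at hS; exact absurd hS (notMem_empty S)
  | cons x xs ih =>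
    intro r S hS y hy
    match r with
    | 0 =>
      rw [casc_cons_zero, mem_singleton] at hS
      subst hS; simp at hy
    | r + 1 =>
      rw [casc_cons_succ, mem_union] at hS
      rcases hS with hS | hS
      · have := (mem_powersetCard.1 hS).1 hy
        exact lt_of_lt_of_le (mem_Iio.1 this) (le_of_lt (hv x (by simp)))
      · obtain ⟨S', hS', rfl⟩ := mem_image.1 hS
        rcases mem_insert.1 hy with rfl | hy'
        · exact hv y (by simp)
        · exact ih (tail_sd hl) (fun z hz => (hv z (by simp [hz]))) r S' hS' y hy'

lemma not_head_mem_casc_tail {x : Fin n} {xs : List (Fin n)} (h : (x :: xs).Chain' (· > ·))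
    {r : ℕ} {S : Finset (Fin n)} (hS : S ∈ casc xs r) : x ∉ S := by
  intro hx
  exact lt_irrefl x (mem_casc_lt (tail_sd h) (head_gt h) r S hS x hx)

lemma sized_casc {l : List (Fin n)} (hl : l.Chain' (· > ·)) :
    ∀ r, ∀ S ∈ casc l r, #S = r := by
  induction l with
  | nil => intro r S hS; rw [casc_nil] at hS; exact absurd hS (notMem_empty S)
  | cons x xs ih =>
    intro r S hS
    match r with
    | 0 => rw [casc_cons_zero, mem_singleton] at hS; simp [hS]
    | r + 1 =>
      rw [casc_cons_succ, mem_union] at hS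
      rcases hS with hS | hS
      · exact (mem_powersetCard.1 hS).2
      · obtain ⟨S', hS', rfl⟩ := mem_image.1 hS
        rw [card_insert_of_notMem (not_head_mem_casc_tail hl hS'), ih (tail_sd hl) r S' hS']

lemma card_casc {l : List (Fin n)} (hl : l.Chain' (· > ·)) :
    ∀ r : ℕ, (#(casc l r) : ℤ) = B (l.map (fun t : Fin n => (t.val : ℤ))) (r : ℤ) := by
  induction l with
  | nil => intro r; simp [casc_nil, B_nil]
  | cons x xs ih =>
    intro r
    match r with
    | 0 =>
      rw [casc_cons_zero]
      simp only [List.map_cons, B_cons]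
      rw [show ((0:ℕ):ℤ) - 1 = (-1 : ℤ) by ring, B_of_neg (by omega), C_ofNat x.val 0]
      simp
    | r + 1 =>
      rw [casc_cons_succ]
      have hdisj : Disjoint ((Finset.Iio x).powersetCard (r + 1)) ((casc xs r).image (insert x)) := by
        rw [disjoint_left]
        intro S hS1 hS2
        obtain ⟨S', hS', rfl⟩ := mem_image.1 hS2
        have hsub := (mem_powersetCard.1 hS1).1
        exact lt_irrefl x (mem_Iio.1 (hsub (mem_insert_self x S')))
      rw [card_union_of_disjoint hdisj]
      have himg : #((casc xs r).image (insert x)) = #(casc xs r) := by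
        apply card_image_of_injOn
        intro S hS T hT hST
        have hxS : x ∉ S := not_head_mem_casc_tail hl hS
        have hxT : x ∉ T := not_head_mem_casc_tail hl hT
        have := congrArg (fun W => Finset.erase W x) hST
        simpa [erase_insert hxS, erase_insert hxT] using this
      rw [himg, card_powersetCard, Fin.card_Iio]
      simp only [List.map_cons, B_cons]
      push_cast
      rw [ih (tail_sd hl) r]
      rw [show ((r:ℤ) + 1) = (((r+1:ℕ)):ℤ) by push_cast; ring, C_ofNat x.val (r+1)]
      push_cast
      ring

lemma casc_tail_subset {x : Fin n} {xs : List (Fin n)} (hl : (x :: xs).Chain' (· > ·)) (r : ℕ) :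
    casc xs r ⊆ casc (x :: xs) r := by
  intro S hS
  have hsub : S ⊆ Finset.Iio x := fun y hy =>
    mem_Iio.2 (mem_casc_lt (tail_sd hl) (head_gt hl) r S hS y hy)
  have hcard : #S = r := sized_casc (tail_sd hl) r S hS
  match r with
  | 0 =>
    rw [casc_cons_zero, mem_singleton]
    exact card_eq_zero.1 hcard
  | r + 1 =>
    rw [casc_cons_succ, mem_union]
    exact Or.inl (mem_powersetCard.2 ⟨hsub, hcard⟩)

lemma shadow_casc_zero (l : List (Fin n)) : ∂ (casc l 0) = ∅ := by
  cases l with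
  | nil => rw [casc_nil, shadow_empty]
  | cons x xs => rw [casc_cons_zero, shadow_singleton_empty]

lemma shadow_casc {l : List (Fin n)} (hl : l.Chain' (· > ·)) :
    ∀ r : ℕ, ∂ (casc l (r + 1)) ⊆ casc l r := by
  induction l with
  | nil => intro r T hT; rw [casc_nil, shadow_empty] at hT; exact absurd hT (notMem_empty T)
  | cons x xs ih =>
    intro r T hT
    rw [mem_shadow_iff] at hT
    obtain ⟨S, hS, a, haS, rfl⟩ := hT
    rw [casc_cons_succ, mem_union] at hS
    rcases hS with hS | hS
    · -- S ⊆ Iio x of size r+1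
      obtain ⟨hsub, hcard⟩ := mem_powersetCard.1 hS
      have hsub' : S.erase a ⊆ Finset.Iio x := (erase_subset a S).trans hsub
      have hcard' : #(S.erase a) = r := by rw [card_erase_of_mem haS]; omega
      match r with
      | 0 => rw [casc_cons_zero, mem_singleton]; exact card_eq_zero.1 hcard'
      | r + 1 =>
        rw [casc_cons_succ, mem_union]
        exact Or.inl (mem_powersetCard.2 ⟨hsub', hcard'⟩)
    · obtain ⟨S', hS', rfl⟩ := mem_image.1 hS
      have hxS' : x ∉ S' := not_head_mem_casc_tail hl hS'
      rcases eq_or_ne a x with rfl | hax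
      · rw [erase_insert hxS']
        exact casc_tail_subset hl r hS'
      · have haS' : a ∈ S' := mem_of_mem_insert_of_ne haS hax
        have herase : (insert x S').erase a = insert x (S'.erase a) := by
          rw [erase_insert_of_ne hax.symm]
        rw [herase]
        match r with
        | 0 =>
          -- S' ∈ casc xs 0 means S' = ∅ or casc xs 0 = ∅; a ∈ S' impossible
          exfalso
          cases xs with
          | nil => rw [casc_nil] at hS'; exact absurd hS' (notMem_empty S')
          | cons y ys =>
            rw [casc_cons_zero, mem_singleton] at hS'
            subst hS'; exact absurd haS' (notMem_empty a)
        | r + 1 =>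
          rw [casc_cons_succ, mem_union]
          right
          refine mem_image.2 ⟨S'.erase a, ih (tail_sd hl) r ?_, rfl⟩
          rw [mem_shadow_iff]
          exact ⟨S', hS', a, haS', rfl⟩

/-- iterated: shadow stays inside cascades -/
lemma shadow_iter_casc {l : List (Fin n)} (hl : l.Chain' (· > ·)) (r i : ℕ) (hi : i ≤ r) :
    ∂^[i] (casc l r) ⊆ casc l (r - i) := by
  induction i with
  | zero => simp
  | succ i ih =>
    have hir : i ≤ r := by omega
    rw [Function.iterate_succ_apply']
    calc ∂ (∂^[i] (casc l r)) ⊆ ∂ (casc l (r - i)) := shadow_mono (ih hir)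
    _ ⊆ casc l (r - i - 1) := by
        obtain ⟨s, hs⟩ : ∃ s, r - i = s + 1 := ⟨r - i - 1, by omega⟩
        rw [hs]
        simpa using shadow_casc hl s
    _ = casc l (r - (i+1)) := by congr 1 <;> omega

/-- "Tall" condition: entry `i` is at least `r - i`. -/
def Tall : List (Fin n) → ℕ → Prop
  | [], _ => True
  | x :: xs, r => r ≤ x.val ∧ Tall xs (r - 1)

lemma Tall.mono {l : List (Fin n)} : ∀ {r s : ℕ}, Tall l r → s ≤ r → Tall l s := by
  induction l with
  | nil => intro r s _ _; trivial
  | cons x xs ih =>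
    intro r s h hsr
    exact ⟨le_trans hsr h.1, ih h.2 (by omega)⟩

lemma casc_subset_shadow {l : List (Fin n)} (hl : l.Chain' (· > ·)) :
    ∀ r : ℕ, Tall l (r + 1) → casc l r ⊆ ∂ (casc l (r + 1)) := by
  induction l with
  | nil => intro r _ T hT; rw [casc_nil] at hT; exact absurd hT (notMem_empty T)
  | cons x xs ih =>
    intro r htall T hT
    rw [mem_shadow_iff_insert_mem]
    match r with
    | 0 =>
      rw [casc_cons_zero, mem_singleton] at hT
      subst hT
      have hx : (0 : ℕ) < x.val := htall.1
      have hne : (Finset.Iio x).Nonempty := by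
        refine ⟨⟨0, lt_of_le_of_lt (Nat.zero_le _) x.isLt⟩, ?_⟩
        rw [mem_Iio]
        exact Fin.mk_lt_of_lt_val hx
      obtain ⟨y, hy⟩ := hne
      refine ⟨y, by simp, ?_⟩
      rw [casc_cons_succ, mem_union]
      left
      rw [mem_powersetCard]
      refine ⟨?_, by simp⟩
      intro z hz; rw [mem_insert] at hz; rcases hz with rfl | hz
      · exact hy
      · exact absurd hz (notMem_empty z)
    | r + 1 =>
      rw [casc_cons_succ, mem_union] at hT
      rcases hT with hT | hT
      · obtain ⟨hsub, hcard⟩ := mem_powersetCard.1 hT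
        have hlt : #T < #(Finset.Iio x) := by
          rw [hcard, Fin.card_Iio]
          exact lt_of_lt_of_le (by omega) htall.1
        have hns : ¬ (Finset.Iio x ⊆ T) := fun hsub2 => absurd (card_le_card hsub2) (by omega)
        obtain ⟨y, hyI, hyT⟩ := not_subset.1 hns
        refine ⟨y, hyT, ?_⟩
        rw [casc_cons_succ, mem_union]
        left
        rw [mem_powersetCard]
        refine ⟨?_, by rw [card_insert_of_notMem hyT, hcard]⟩
        intro z hz; rcases mem_insert.1 hz with rfl | hz
        · exact hyI
        · exact hsub hz
      · obtain ⟨T', hT', rfl⟩ := mem_image.1 hT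
        obtain ⟨a, haT', hins⟩ := mem_shadow_iff_insert_mem.1 (ih (tail_sd hl) r htall.2 hT')
        have hax : a < x := mem_casc_lt (tail_sd hl) (head_gt hl) (r+1) _ hins a (mem_insert_self a T')
        refine ⟨a, ?_, ?_⟩
        · rw [mem_insert]
          push_neg
          exact ⟨ne_of_lt hax, haT'⟩
        · rw [Finset.insert_comm, casc_cons_succ, mem_union]
          right
          exact mem_image.2 ⟨insert a T', hins, rfl⟩

lemma shadow_iter_casc_eq {l : List (Fin n)} (hl : l.Chain' (· > ·)) (r : ℕ) (htall : Tall l r)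
    (i : ℕ) (hi : i ≤ r) : ∂^[i] (casc l r) = casc l (r - i) := by
  induction i with
  | zero => simp
  | succ i ih =>
    have hir : i ≤ r := by omega
    rw [Function.iterate_succ_apply', ih hir]
    obtain ⟨s, hs⟩ : ∃ s, r - i = s + 1 := ⟨r - i - 1, by omega⟩
    rw [hs]
    have h1 : ∂ (casc l (s + 1)) ⊆ casc l s := shadow_casc hl s
    have h2 : casc l s ⊆ ∂ (casc l (s + 1)) :=
      casc_subset_shadow hl s (htall.mono (by omega))
    have : casc l s = ∂ (casc l (s+1)) := Subset.antisymm h2 h1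
    rw [← this]
    congr 1
    omega

open Finset.Colex in
lemma isInitSeg_casc {l : List (Fin n)} (hl : l.Chain' (· > ·)) (r : ℕ) :
    IsInitSeg (casc l r) r := by
  induction l generalizing r with
  | nil => rw [casc_nil]; exact isInitSeg_empty
  | cons x xs ih =>
    constructor
    · intro S hS
      exact sized_casc hl r S hS
    · rintro s t hs ⟨hts, htcard⟩
      match r with
      | 0 =>
        rw [casc_cons_zero, mem_singleton]
        exact card_eq_zero.1 htcard
      | r + 1 =>
        obtain ⟨w, hws, hwt, hmax⟩ := toColex_lt_toColex_iff_exists_forall_lt.1 hts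
        -- all elements of s are ≤ x
        have hsle : ∀ y ∈ s, y ≤ x := by
          intro y hy
          rcases (mem_union.1 (by rwa [casc_cons_succ] at hs)) with h | h
          · exact le_of_lt (mem_Iio.1 ((mem_powersetCard.1 h).1 hy))
          · obtain ⟨S', hS', rfl⟩ := mem_image.1 h
            rcases mem_insert.1 hy with rfl | hy'
            · exact le_refl _
            · exact le_of_lt (mem_casc_lt (tail_sd hl) (head_gt hl) r S' hS' y hy')
        by_cases hxt : x ∈ t
        · -- x must be in s as well, else t > s
          rw [casc_cons_succ, mem_union] at hs
          have hxs : x ∈ s := by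
            by_contra hxs
            have := hmax x hxt hxs
            exact absurd (lt_of_lt_of_le this (hsle w hws)) (lt_irrefl x)
          -- s = insert x s' with s' in the tail cascade
          rcases hs with hs | hs
          · exact absurd (mem_Iio.1 ((mem_powersetCard.1 hs).1 hxs)) (lt_irrefl x)
          obtain ⟨S', hS', rfl⟩ := mem_image.1 hs
          have hxS' : x ∉ S' := not_head_mem_casc_tail hl hS'
          have htx : t = insert x (t.erase x) := (insert_erase hxt).symm
          have hlt' : toColex (t.erase x) < toColex S' := by
            rw [toColex_lt_toColex_iff_exists_forall_lt]
            have hwx : w ≠ x := fun h => hwt (h ▸ hxt)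
            refine ⟨w, mem_of_mem_insert_of_ne hws hwx, fun hw' => hwt (mem_of_mem_erase hw'), ?_⟩
            intro b hb hbS'
            have hbx : b ≠ x := (mem_erase.1 hb).1
            exact hmax b (mem_of_mem_erase hb) (fun hbs => hbS' (mem_of_mem_insert_of_ne hbs hbx))
          have hcard' : #(t.erase x) = r := by rw [card_erase_of_mem hxt]; omega
          have := (ih (tail_sd hl) r).2 hS' ⟨hlt', hcard'⟩
          rw [casc_cons_succ, mem_union, htx]
          exact Or.inr (mem_image.2 ⟨t.erase x, this, rfl⟩)
        · -- x ∉ t : show t ⊆ Iio x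
          rw [casc_cons_succ, mem_union]
          left
          rw [mem_powersetCard]
          refine ⟨?_, htcard⟩
          intro y hy
          rw [mem_Iio]
          by_contra hxy
          push_neg at hxy
          have hxy' : x < y := lt_of_le_of_ne hxy (fun h => hxt (h ▸ hy))
          have hys : y ∉ s := fun hys => absurd (hsle y hys) (not_le.2 hxy')
          have h1 : y < w := hmax y hy hys
          have h2 : w ≤ x := hsle w hws
          exact absurd (lt_trans (lt_of_lt_of_le h1 h2) hxy') (lt_irrefl y)

lemma casc_mono_of_lex {l m : List (Fin n)} (hl : l.Chain' (· > ·)) (hm : m.Chain' (· > ·))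
    (hlex : List.Lex (· < ·) l m ∨ l = m) : ∀ r, casc l r ⊆ casc m r := by
  rcases hlex with hlex | rfl
  swap
  · exact fun r => Subset.refl _
  induction hlex with
  | nil =>
    intro r S hS
    rw [casc_nil] at hS
    exact absurd hS (notMem_empty S)
  | @cons x l₁ l₂ hlex12 ih =>
    intro r S hS
    match r with
    | 0 => rwa [casc_cons_zero] at hS ⊢
    | r + 1 =>
      rw [casc_cons_succ, mem_union] at hS ⊢
      rcases hS with hS | hS
      · exact Or.inl hS
      · obtain ⟨S', hS', rfl⟩ := mem_image.1 hS
        exact Or.inr (mem_image.2 ⟨S', ih (tail_sd hl) (tail_sd hm) r hS', rfl⟩)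
  | @rel x l₁ y l₂ hxy =>
    intro r S hS
    have hbound : ∀ z ∈ S, z < y := by
      intro z hz
      refine mem_casc_lt hl ?_ r S hS z hz
      intro e he
      rcases List.mem_cons.1 he with rfl | he'
      · exact hxy
      · exact lt_trans (head_gt hl e he') hxy
    have hcard : #S = r := sized_casc hl r S hS
    match r with
    | 0 =>
      rw [casc_cons_zero, mem_singleton]
      exact card_eq_zero.1 hcard
    | r + 1 =>
      rw [casc_cons_succ, mem_union]
      left
      rw [mem_powersetCard]
      exact ⟨fun z hz => mem_Iio.2 (hbound z hz), hcard⟩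

/-! ### Cones over a fresh vertex -/

lemma card_cone {G : Finset (Finset (Fin n))} {v : Fin n} (hG : ∀ S ∈ G, v ∉ S) :
    #(G.image (insert v)) = #G := by
  apply card_image_of_injOn
  intro S hS T hT hST
  have := congrArg (fun W => Finset.erase W v) hST
  simpa [erase_insert (hG S hS), erase_insert (hG T hT)] using this

lemma shadow_cone {G : Finset (Finset (Fin n))} {v : Fin n} (hG : ∀ S ∈ G, v ∉ S) :
    ∂ (G.image (insert v)) ⊆ (∂ G).image (insert v) ∪ G := by
  intro T hT
  rw [mem_shadow_iff] at hT
  obtain ⟨S0, hS0, a, haS0, rfl⟩ := hT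
  obtain ⟨S, hS, rfl⟩ := mem_image.1 hS0
  rcases eq_or_ne a v with rfl | hav
  · rw [erase_insert (hG S hS), mem_union]
    exact Or.inr hS
  · have haS : a ∈ S := mem_of_mem_insert_of_ne haS0 hav
    rw [mem_union]
    left
    rw [erase_insert_of_ne hav.symm]
    refine mem_image.2 ⟨S.erase a, ?_, rfl⟩
    rw [mem_shadow_iff]
    exact ⟨S, hS, a, haS, rfl⟩

lemma shadow_union_subset (G H : Finset (Finset (Fin n))) : ∂ (G ∪ H) ⊆ ∂ G ∪ ∂ H := by
  intro T hT
  rw [mem_shadow_iff] at hT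
  obtain ⟨S, hS, a, haS, rfl⟩ := hT
  rcases mem_union.1 hS with h | h
  · exact mem_union_left _ (mem_shadow_iff.2 ⟨S, h, a, haS, rfl⟩)
  · exact mem_union_right _ (mem_shadow_iff.2 ⟨S, h, a, haS, rfl⟩)

/-! ### Existence and nesting of initial segments -/

open Finset.Colex in
lemma isInitSeg_subset_of_card_le {J G : Finset (Finset (Fin n))} {r : ℕ}
    (hJ : IsInitSeg J r) (hG : IsInitSeg G r) (h : #J ≤ #G) : J ⊆ G := by
  rcases hJ.total hG with h1 | h1
  · exact h1
  · have : G = J := eq_of_subset_of_card_le h1 h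
    exact this ▸ Subset.refl _

open Finset.Colex in
lemma exists_initSeg_of_card {r M : ℕ}
    (hM : M ≤ #((univ : Finset (Fin n)).powersetCard r)) :
    ∃ J : Finset (Finset (Fin n)), IsInitSeg J r ∧ #J = M := by
  induction M with
  | zero => exact ⟨∅, isInitSeg_empty, rfl⟩
  | succ M ih =>
    obtain ⟨J, hJ, hJcard⟩ := ih (by omega)
    have hJsub : J ⊆ (univ : Finset (Fin n)).powersetCard r := by
      intro S hS
      rw [mem_powersetCard]
      exact ⟨subset_univ S, hJ.1 hS⟩
    have hne : ((univ : Finset (Fin n)).powersetCard r \ J).Nonempty := by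
      rw [sdiff_nonempty]
      intro hsub
      have := card_le_card hsub
      omega
    obtain ⟨s, hs, hsmin⟩ := exists_min_image _ (fun S => toColex S) hne
    rw [mem_sdiff] at hs
    refine ⟨insert s J, ⟨?_, ?_⟩, ?_⟩
    · intro S hS
      rcases mem_insert.1 hS with rfl | hS
      · exact (mem_powersetCard.1 hs.1).2
      · exact hJ.1 hS
    · rintro u t hu ⟨htu, htcard⟩
      rcases mem_insert.1 hu with rfl | hu'
      · by_cases htJ : t ∈ J
        · exact mem_insert_of_mem htJ
        · exfalso
          have htP : t ∈ (univ : Finset (Fin n)).powersetCard r :=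
            mem_powersetCard.2 ⟨subset_univ t, htcard⟩
          have := hsmin t (mem_sdiff.2 ⟨htP, htJ⟩)
          exact absurd (lt_of_lt_of_le htu this) (lt_irrefl _)
      · exact mem_insert_of_mem (hJ.2 hu' ⟨htu, htcard⟩)
    · rw [card_insert_of_notMem hs.2, hJcard]

lemma shadow_iter_mono {G H : Finset (Finset (Fin n))} (h : G ⊆ H) (j : ℕ) :
    ∂^[j] G ⊆ ∂^[j] H := by
  induction j with
  | zero => simpa
  | succ j ih => rw [Function.iterate_succ_apply', Function.iterate_succ_apply']
                 exact shadow_mono ih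

open Finset.Colex in
theorem main_fin {k : ℕ} (v : Fin n)
    (A A' Bf Cf : List (Fin n))
    (hA : A.Chain' (· > ·)) (hA' : A'.Chain' (· > ·))
    (hB : Bf.Chain' (· > ·)) (hC : Cf.Chain' (· > ·))
    (htall : Tall A k)
    (hA'v : ∀ x ∈ A', x < v) (hBv : ∀ x ∈ Bf, x < v) (hCv : ∀ x ∈ Cf, x < v)
    (hlex : List.Lex (· < ·) A' Bf ∨ A' = Bf)
    (hPm : #(casc A k) = #(casc Bf k) + #(casc Cf (k-1)))
    (hPa : #(casc A k) = #(casc A' k) + #(casc A' (k-1)))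
    (i : ℕ) (hik : i + 1 ≤ k) :
    #(casc A (k - i)) ≤ #(casc Bf (k - i)) + #(casc Cf (k - 1 - i)) := by
  -- Step 1 : value bound for `Cf`'s cascade
  have hsubAB : #(casc A' k) ≤ #(casc Bf k) :=
    card_le_card (casc_mono_of_lex hA' hB hlex k)
  have hCA' : #(casc Cf (k-1)) ≤ #(casc A' (k-1)) := by omega
  -- Step 2 : replace `Cf`'s cascade by an initial segment of the same size
  have hCuniv : casc Cf (k-1) ⊆ (univ : Finset (Fin n)).powersetCard (k-1) := by
    intro S hS
    exact mem_powersetCard.2 ⟨subset_univ S, sized_casc hC (k-1) S hS⟩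
  obtain ⟨J, hJinit, hJcard⟩ := exists_initSeg_of_card (card_le_card hCuniv)
  have hJsubA' : J ⊆ casc A' (k-1) :=
    isInitSeg_subset_of_card_le hJinit (isInitSeg_casc hA' (k-1)) (le_of_eq_of_le hJcard hCA')
  -- iterated shadows of J stay inside cascades of A'
  have hJiter : ∀ j, j ≤ k - 1 → ∂^[j] J ⊆ casc A' (k - 1 - j) := by
    intro j hj
    exact (shadow_iter_mono hJsubA' j).trans (shadow_iter_casc hA' (k-1) j hj)
  have hJv : ∀ j, j ≤ k - 1 → ∀ S ∈ ∂^[j] J, v ∉ S := by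
    intro j hj S hS hv
    exact lt_irrefl v (mem_casc_lt hA' hA'v (k-1-j) S (hJiter j hj hS) v hv)
  -- Step 3 : the comparison family F
  set F := casc Bf k ∪ J.image (insert v) with hF
  have hBfv : ∀ S ∈ casc Bf k, v ∉ S := by
    intro S hS hv
    exact lt_irrefl v (mem_casc_lt hB hBv k S hS v hv)
  have hdisj : Disjoint (casc Bf k) (J.image (insert v)) := by
    rw [disjoint_left]
    intro S hS1 hS2
    obtain ⟨S', _, rfl⟩ := mem_image.1 hS2
    exact hBfv _ hS1 (mem_insert_self v S')
  have hJv0 : ∀ S ∈ J, v ∉ S := hJv 0 (by omega)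
  have hFcard : #F = #(casc A k) := by
    rw [hF, card_union_of_disjoint hdisj, card_cone hJv0, hJcard, hPm]
  have hFsized : (↑F : Set (Finset (Fin n))).Sized k := by
    intro S hS
    rw [mem_coe, hF, mem_union] at hS
    rcases hS with hS | hS
    · exact sized_casc hB k S hS
    · obtain ⟨S', hS', rfl⟩ := mem_image.1 hS
      rw [card_insert_of_notMem (hJv0 S' hS'), hJinit.1 hS']
      omega
  -- Step 4 : invariant for iterated shadows of F
  have INV : ∀ j, j + 1 ≤ k → ∂^[j] F ⊆ casc Bf (k - j) ∪ (∂^[j] J).image (insert v) := by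
    intro j
    induction j with
    | zero =>
      intro _
      simpa [hF] using Subset.refl F
    | succ j ih =>
      intro hj1
      have hj : j + 1 ≤ k := by omega
      rw [Function.iterate_succ_apply']
      refine (shadow_mono (ih hj)).trans ?_
      refine (shadow_union_subset _ _).trans ?_
      have h1 : ∂ (casc Bf (k - j)) ⊆ casc Bf (k - (j+1)) := by
        obtain ⟨s, hs⟩ : ∃ s, k - j = s + 1 := ⟨k - j - 1, by omega⟩
        rw [hs, show k - (j+1) = s by omega]
        exact shadow_casc hB s
      have h2 : ∂ ((∂^[j] J).image (insert v)) ⊆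
          ((∂^[j+1] J).image (insert v)) ∪ casc Bf (k - (j+1)) := by
        refine (shadow_cone (hJv j (by omega))).trans ?_
        apply union_subset_union
        · rw [Function.iterate_succ_apply']
        · refine (hJiter j (by omega)).trans ?_
          refine (casc_mono_of_lex hA' hB hlex (k-1-j)).trans ?_
          rw [show k - 1 - j = k - (j+1) by omega]
      intro S hS
      rcases mem_union.1 hS with hS | hS
      · exact mem_union_left _ (h1 hS)
      · rcases mem_union.1 (h2 hS) with hS' | hS'
        · exact mem_union_right _ hS'
        · exact mem_union_left _ hS'
  -- Step 5 : the chain of inequalities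
  have e1 : #(casc A (k - i)) = #(∂^[i] (casc A k)) := by
    rw [shadow_iter_casc_eq hA k htall i (by omega)]
  have e2 : #(∂^[i] (casc A k)) ≤ #(∂^[i] F) :=
    Finset.iterated_kk hFsized (le_of_eq hFcard.symm) (isInitSeg_casc hA k)
  have e3 : #(∂^[i] F) ≤ #(casc Bf (k - i)) + #(∂^[i] J) := by
    refine le_trans (card_le_card (INV i hik)) ?_
    refine le_trans (card_union_le _ _) ?_
    rw [card_cone (hJv i (by omega))]
  have e4 : #(∂^[i] J) ≤ #(∂^[i] (casc Cf (k-1))) :=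
    Finset.iterated_kk (fun S hS => sized_casc hC (k-1) S hS) (le_of_eq hJcard) hJinit
  have e5 : #(∂^[i] (casc Cf (k-1))) ≤ #(casc Cf (k-1-i)) :=
    card_le_card (shadow_iter_casc hC (k-1) i (by omega))
  omega




/-! ### Bridge from integer lists to `Fin` lists -/

lemma le_foldr_max (L : List ℕ) : ∀ y ∈ L, y ≤ L.foldr max 0 := by
  induction L with
  | nil => simp
  | cons x xs ih =>
    intro y hy
    rcases List.mem_cons.1 hy with rfl | hy
    · simp only [List.foldr_cons]; omega
    · have := ih y hy
      simp only [List.foldr_cons]; omega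

def toFin (N : ℕ) (l : List ℤ) (h : ∀ x ∈ l, x.toNat < N) : List (Fin N) :=
  l.pmap (fun x hx => (⟨x.toNat, hx⟩ : Fin N)) h

lemma toFin_nil {N : ℕ} (h) : toFin N [] h = [] := rfl

lemma toFin_cons {N : ℕ} (x : ℤ) (xs : List ℤ) (h) :
    toFin N (x :: xs) h = (⟨x.toNat, h x (by simp)⟩ : Fin N) ::
      toFin N xs (fun y hy => h y (by simp [hy])) := rfl

lemma toFin_map_val {N : ℕ} : ∀ (l : List ℤ) (h) (_ : ∀ x ∈ l, 0 ≤ x),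
    (toFin N l h).map (fun t : Fin N => (t.val : ℤ)) = l := by
  intro l
  induction l with
  | nil => intro h hnn; rfl
  | cons x xs ih =>
    intro h hnn
    rw [toFin_cons, List.map_cons, ih _ (fun y hy => hnn y (by simp [hy]))]
    congr 1
    exact Int.toNat_of_nonneg (hnn x (by simp))

lemma toFin_chain' {N : ℕ} : ∀ (l : List ℤ) (h) (_ : ∀ x ∈ l, 0 ≤ x),
    l.Chain' (· > ·) → (toFin N l h).Chain' (· > ·) := by
  intro l
  induction l with
  | nil => intro h hnn _; exact List.isChain_nil
  | cons x xs ih =>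
    intro h hnn hch
    rw [toFin_cons]
    cases xs with
    | nil => exact List.isChain_singleton _
    | cons y ys =>
      show List.IsChain _ _
      rw [toFin_cons, List.isChain_cons_cons]
      have hxy : y < x := (List.isChain_cons_cons.1 hch).1
      have hy0 : 0 ≤ y := hnn y (by simp)
      refine ⟨?_, ?_⟩
      · show (⟨y.toNat, _⟩ : Fin N) < ⟨x.toNat, _⟩
        simp only [Fin.mk_lt_mk]
        omega
      · have := ih (fun z hz => h z (by simp [hz])) (fun z hz => hnn z (by simp [hz]))
          (List.isChain_cons_cons.1 hch).2
        rwa [toFin_cons] at this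

lemma Tall_zero {N : ℕ} : ∀ (L : List (Fin N)), Tall L 0 := by
  intro L
  induction L with
  | nil => trivial
  | cons x xs ih => exact ⟨Nat.zero_le _, by simpa using ih⟩

lemma tall_toFin {N : ℕ} : ∀ (l : List ℤ) (h) (r : ℕ),
    (∀ j, j < l.length → (r : ℤ) - j ≤ l.getD j 0) → Tall (toFin N l h) r := by
  intro l
  induction l with
  | nil => intro h r _; trivial
  | cons x xs ih =>
    intro h r hidx
    match r with
    | 0 => exact Tall_zero _
    | r + 1 =>
      rw [toFin_cons]
      constructor
      · have := hidx 0 (by simp)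
        rw [List.getD_cons_zero] at this
        push_cast at this
        show r + 1 ≤ x.toNat
        omega
      · show Tall (toFin N xs _) (r + 1 - 1)
        rw [show r + 1 - 1 = r from rfl]
        apply ih _ r
        intro j hj
        have := hidx (j+1) (by simp; omega)
        rw [List.getD_cons_succ] at this
        push_cast at this ⊢
        omega

lemma lex_toFin {N : ℕ} : ∀ (l m : List ℤ) (hl) (hm) (_ : ∀ x ∈ l, 0 ≤ x),
    List.Lex (· < ·) l m → List.Lex (· < ·) (toFin N l hl) (toFin N m hm) := by
  intro l
  induction l with
  | nil =>
    intro m hl hm _ hlex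
    cases m with
    | nil => exact absurd hlex (by intro h; cases h)
    | cons y ys => rw [toFin_nil, toFin_cons]; exact List.Lex.nil
  | cons x xs ih =>
    intro m hl hm hnn hlex
    cases m with
    | nil => exact absurd hlex (by intro h; cases h)
    | cons y ys =>
      rw [toFin_cons, toFin_cons]
      cases hlex with
      | cons h =>
        exact List.Lex.cons (ih ys _ _ (fun z hz => hnn z (by simp [hz])) h)
      | rel h =>
        apply List.Lex.rel
        have hx0 : 0 ≤ x := hnn x (by simp)
        show (⟨x.toNat, _⟩ : Fin N) < ⟨y.toNat, _⟩
        simp only [Fin.mk_lt_mk]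
        omega

end KKproof


lemma C_zero {m : ℤ} (hm : 0 ≤ m) : C m 0 = 1 := by simp [C, hm]

lemma B_zero_of_ne_nil {l : List ℤ} (hne : l ≠ []) (hnn : ∀ x ∈ l, 0 ≤ x) : B l 0 = 1 := by
  cases l with
  | nil => exact absurd rfl hne
  | cons x xs =>
    rw [B_cons, C_zero (hnn x (by simp)), B_of_neg (by omega)]
    ring

open KKproof in
lemma mem_toFin_val {N : ℕ} {l : List ℤ} {h} {t : Fin N} (ht : t ∈ toFin N l h) :
    ∃ x ∈ l, t.val = x.toNat := by
  rw [toFin, List.mem_pmap] at ht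
  obtain ⟨x, hxl, hfx⟩ := ht
  exact ⟨x, hxl, by rw [← hfx]⟩

/-- Key inequality: if `B(a,k) = B(b,k) + B(c,k-1)` with `b ≥_lex a-1`, then
`B(a,k-i) ≤ B(b,k-i) + B(c,k-i-1)` for every `i ≥ 0`. -/
theorem key_inequality
    (m : ℤ) (k : ℕ) (hm : 0 < m) (hk : 0 < k)
    (a : List ℤ) (ha : IsKBinom k m a)
    (b : List ℤ) (hbne : b ≠ []) (hbdec : b.Chain' (· > ·)) (hbnn : ∀ x ∈ b, 0 ≤ x)
    (c : List ℤ) (hcdec : c.Chain' (· > ·)) (hcnn : ∀ x ∈ c, 0 ≤ x)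
    (heq : B a (k : ℤ) = B b (k : ℤ) + B c ((k : ℤ) - 1))
    (hlex : lexLE (a.map (· - 1)) b)
    (i : ℕ) :
    B a ((k : ℤ) - i) ≤ B b ((k : ℤ) - i) + B c ((k : ℤ) - i - 1) := by
  classical
  obtain ⟨⟨hadec, halen, haidx⟩, hmB⟩ := ha
  -- entries of `a` are at least 1
  have hapos : ∀ x ∈ a, 1 ≤ x := by
    intro x hx
    obtain ⟨j, hj, hjx⟩ := List.mem_iff_getElem.1 hx
    have h1 := haidx j hj
    rw [List.getD_eq_getElem _ _ hj, hjx] at h1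
    have hjk : j < k := lt_of_lt_of_le hj halen
    omega
  have hann : ∀ x ∈ a, 0 ≤ x := fun x hx => le_trans (by omega) (hapos x hx)
  -- `a` is nonempty
  have hane : a ≠ [] := by
    intro h
    rw [h, B_nil] at hmB
    omega
  -- trivial case: level is negative
  rcases lt_trichotomy (k : ℤ) (i : ℤ) with hki | hki | hki
  · rw [B_of_neg (by omega)]
    have h1 : 0 ≤ B b ((k : ℤ) - i) := B_nonneg hbnn _
    have h2 : 0 ≤ B c ((k : ℤ) - i - 1) := B_nonneg hcnn _
    omega
  · -- i = k : both sides are `1 + 0`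
    rw [show (k : ℤ) - i = 0 by omega, B_zero_of_ne_nil hane hann,
      B_zero_of_ne_nil hbne hbnn, B_of_neg (by omega)]
    omega
  -- main case : i + 1 ≤ k
  have hik : i + 1 ≤ k := by omega
  -- the ambient ground set
  obtain ⟨N, hN2, hbnd⟩ : ∃ N : ℕ, 2 ≤ N ∧ ∀ x ∈ a ++ b ++ c, x.toNat < N - 1 := by
    refine ⟨((a ++ b ++ c).map Int.toNat).foldr max 0 + 2, by omega, ?_⟩
    intro x hx
    have : x.toNat ∈ (a ++ b ++ c).map Int.toNat := List.mem_map_of_mem hx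
    have := KKproof.le_foldr_max _ _ this
    omega
  have hba : ∀ x ∈ a, x.toNat < N := fun x hx => by
    have := hbnd x (by simp [hx]); omega
  have hba' : ∀ x ∈ a.map (· - 1), x.toNat < N := by
    intro x hx
    obtain ⟨y, hy, rfl⟩ := List.mem_map.1 hx
    have := hbnd y (by simp [hy]); omega
  have hbb : ∀ x ∈ b, x.toNat < N := fun x hx => by
    have := hbnd x (by simp [hx]); omega
  have hbc : ∀ x ∈ c, x.toNat < N := fun x hx => by
    have := hbnd x (by simp [hx]); omega
  have ha'nn : ∀ x ∈ a.map (· - 1), 0 ≤ x := by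
    intro x hx
    obtain ⟨y, hy, rfl⟩ := List.mem_map.1 hx
    have := hapos y hy; omega
  have ha'dec : (a.map (· - 1)).Chain' (· > ·) := by
    show List.IsChain _ _
    rw [List.isChain_map]
    exact (show List.IsChain _ a from hadec).imp (fun p q h => by simp only [gt_iff_lt]; omega)
  -- the Fin-valued lists
  have hAF := KKproof.toFin_chain' (N := N) a hba hann hadec
  have hA'F := KKproof.toFin_chain' (N := N) (a.map (· - 1)) hba' ha'nn ha'dec
  have hBF := KKproof.toFin_chain' (N := N) b hbb hbnn hbdec
  have hCF := KKproof.toFin_chain' (N := N) c hbc hcnn hcdec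
  have htall : KKproof.Tall (KKproof.toFin N a hba) k := KKproof.tall_toFin a hba k haidx
  -- the extra vertex
  have hNpos : N - 1 < N := by omega
  set v : Fin N := ⟨N - 1, hNpos⟩ with hv
  have hvA' : ∀ t ∈ KKproof.toFin N (a.map (· - 1)) hba', t < v := by
    intro t ht
    obtain ⟨x, hx, hxt⟩ := mem_toFin_val ht
    have := hbnd (x + 1) (by
      obtain ⟨y, hy, rfl⟩ := List.mem_map.1 hx
      simpa using Or.inl hy)
    show t.val < N - 1
    obtain ⟨y, hy, rfl⟩ := List.mem_map.1 hx
    have := hbnd y (by simp [hy])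
    omega
  have hvB : ∀ t ∈ KKproof.toFin N b hbb, t < v := by
    intro t ht
    obtain ⟨x, hx, hxt⟩ := mem_toFin_val ht
    have := hbnd x (by simp [hx])
    show t.val < N - 1
    omega
  have hvC : ∀ t ∈ KKproof.toFin N c hbc, t < v := by
    intro t ht
    obtain ⟨x, hx, hxt⟩ := mem_toFin_val ht
    have := hbnd x (by simp [hx])
    show t.val < N - 1
    omega
  -- lex hypothesis transfer
  have hlexF : List.Lex (· < ·) (KKproof.toFin N (a.map (· - 1)) hba') (KKproof.toFin N b hbb) ∨
      KKproof.toFin N (a.map (· - 1)) hba' = KKproof.toFin N b hbb := by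
    rcases hlex with heqab | hlt
    · right
      subst heqab
      rfl
    · left
      exact KKproof.lex_toFin _ _ _ _ ha'nn hlt
  -- cardinality bridges
  have hcast : ∀ (l : List ℤ) (hb : ∀ x ∈ l, x.toNat < N) (hn : ∀ x ∈ l, 0 ≤ x)
      (hch : l.Chain' (· > ·)) (r : ℕ),
      (#(KKproof.casc (KKproof.toFin N l hb) r) : ℤ) = B l (r : ℤ) := by
    intro l hb hn hch r
    rw [KKproof.card_casc (KKproof.toFin_chain' l hb hn hch) r, KKproof.toFin_map_val l hb hn]
  have c1 : ((k : ℤ)) = ((k : ℕ) : ℤ) := rfl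
  have hPm : #(KKproof.casc (KKproof.toFin N a hba) k) =
      #(KKproof.casc (KKproof.toFin N b hbb) k) +
      #(KKproof.casc (KKproof.toFin N c hbc) (k - 1)) := by
    have h1 := hcast a hba hann hadec k
    have h2 := hcast b hbb hbnn hbdec k
    have h3 := hcast c hbc hcnn hcdec (k - 1)
    rw [show (((k - 1 : ℕ)) : ℤ) = (k : ℤ) - 1 by omega] at h3
    omega
  have hPa : #(KKproof.casc (KKproof.toFin N a hba) k) =
      #(KKproof.casc (KKproof.toFin N (a.map (· - 1)) hba') k) +
      #(KKproof.casc (KKproof.toFin N (a.map (· - 1)) hba') (k - 1)) := by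
    have h1 := hcast a hba hann hadec k
    have h4 := hcast (a.map (· - 1)) hba' ha'nn ha'dec k
    have h5 := hcast (a.map (· - 1)) hba' ha'nn ha'dec (k - 1)
    rw [show (((k - 1 : ℕ)) : ℤ) = (k : ℤ) - 1 by omega] at h5
    have hp := B_pascal hapos (k : ℤ)
    omega
  -- apply the combinatorial main theorem
  have hmain := KKproof.main_fin v (KKproof.toFin N a hba) (KKproof.toFin N (a.map (· - 1)) hba')
    (KKproof.toFin N b hbb) (KKproof.toFin N c hbc) hAF hA'F hBF hCF htall hvA' hvB hvC
    hlexF hPm hPa i hik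
  -- bridge back
  have h6 := hcast a hba hann hadec (k - i)
  have h7 := hcast b hbb hbnn hbdec (k - i)
  have h8 := hcast c hbc hcnn hcdec (k - 1 - i)
  rw [show (((k - i : ℕ)) : ℤ) = (k : ℤ) - i by omega] at h6 h7
  rw [show (((k - 1 - i : ℕ)) : ℤ) = (k : ℤ) - i - 1 by omega] at h8
  omega
end

section
/- Let n ≥ k ≥ 1 and 0 < m ≤ C(n,k), and let a be the k-binomial decomposition of m. Then the colex initial segment I_{n,k}(m) is extremal: |Δ(I_{n,k}(m))| = B(a, k−1). -/
/-- A family `T` of `j`-element sets is extremal if `|Δ(T)| = B(d, j-1)`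
where `d` is the `j`-binomial decomposition of `|T|`. -/
def IsExtremal {α : Type} [DecidableEq α] (j : ℕ) (T : Finset (Finset α)) : Prop :=
  ∃ d : List ℤ, IsKBinom j (T.card : ℤ) d ∧ ((Finset.shadow T).card : ℤ) = B d ((j : ℤ) - 1)

/-- Colex order: `X ≤ Y` iff `X = Y` or the maximum of the symmetric difference lies in `Y`. -/
def colexLE {α : Type} [LinearOrder α] [DecidableEq α] (X Y : Finset α) : Prop :=
  X = Y ∨ ∃ a ∈ Y \ X, ∀ b ∈ (X \ Y) ∪ (Y \ X), b ≤ a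

/-- The family of the `m` smallest `k`-element subsets of `Fin n` in colex order. -/
noncomputable def colexInit (n k m : ℕ) : Finset (Finset (Fin n)) :=
  @Finset.filter _
    (fun X => (@Finset.filter _ (fun Y => colexLE Y X) (Classical.decPred _)
        (Finset.powersetCard k (Finset.univ : Finset (Fin n)))).card ≤ m)
    (Classical.decPred _) (Finset.powersetCard k (Finset.univ : Finset (Fin n)))


open Finset Finset.Colex
open scoped symmDiff

section Bridge
variable {α : Type} [LinearOrder α] [DecidableEq α]

lemma colexLE_iff (X Y : Finset α) : colexLE X Y ↔ toColex X ≤ toColex Y := by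
  constructor
  · rintro (rfl | ⟨a, haYX, hmax⟩)
    · exact le_rfl
    rw [mem_sdiff] at haYX
    rw [toColex_le_toColex]
    intro x hxX hxY
    exact ⟨a, haYX.1, haYX.2, hmax x (by simp [hxX, hxY])⟩
  · intro h
    rcases eq_or_ne X Y with rfl | hne
    · exact Or.inl rfl
    right
    have hne' : ((X \ Y) ∪ (Y \ X)).Nonempty := by
      rw [nonempty_iff_ne_empty]
      intro hemp
      apply hne
      rw [union_eq_empty, sdiff_eq_empty_iff_subset, sdiff_eq_empty_iff_subset] at hemp
      exact Finset.Subset.antisymm hemp.1 hemp.2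
    set a := ((X \ Y) ∪ (Y \ X)).max' hne' with ha
    have hamem := ((X \ Y) ∪ (Y \ X)).max'_mem hne'
    have haY : a ∈ Y \ X := by
      rcases mem_union.1 hamem with hXY | hYX
      · exfalso
        rw [mem_sdiff] at hXY
        obtain ⟨b, hbY, hbX, hab⟩ := toColex_le_toColex.1 h hXY.1 hXY.2
        have hba : b ≤ a := le_max' _ _ (mem_union_right _ (mem_sdiff.2 ⟨hbY, hbX⟩))
        have : a = b := le_antisymm hab hba
        exact hXY.2 (by rwa [← this] at hbY)
      · exact hYX
    exact ⟨a, haY, fun b hb => le_max' _ _ hb⟩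
end Bridge

section Count
variable {n : ℕ}

lemma initSeg_empty_card : #(initSeg (∅ : Finset (Fin n))) = 1 := by
  have h : initSeg (∅ : Finset (Fin n)) = {∅} := by
    ext t
    simp only [mem_initSeg, card_empty, mem_singleton, toColex_empty, le_bot_iff]
    constructor
    · rintro ⟨h1, _⟩
      exact (card_eq_zero.mp h1.symm)
    · rintro rfl
      simp
  rw [h, card_singleton]

lemma forall_lt_of_le_erase_max {s t : Finset (Fin n)} (hs : s.Nonempty)
    (ht : toColex t ≤ toColex (s.erase (s.max' hs))) : ∀ x ∈ t, x < s.max' hs := by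
  refine forall_lt_mono ht ?_
  intro b hb
  rw [mem_erase] at hb
  exact lt_of_le_of_ne (le_max' _ _ hb.2) hb.1

lemma card_initSeg_rec (s : Finset (Fin n)) (hs : s.Nonempty) :
    #(initSeg s) = Nat.choose ((s.max' hs : Fin n) : ℕ) #s + #(initSeg (s.erase (s.max' hs))) := by
  set M := s.max' hs with hM
  have hsplit := card_filter_add_card_filter_not (s := initSeg s)
    (p := fun t => M ∈ t)
  have h1 : {t ∈ initSeg s | M ∉ t} = powersetCard #s (Iio M) := by
    ext t
    simp only [mem_filter, mem_initSeg, mem_powersetCard]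
    constructor
    · rintro ⟨⟨hcard, hle⟩, hMt⟩
      refine ⟨fun x hx => ?_, hcard.symm⟩
      rw [mem_Iio]
      by_contra hxM
      push_neg at hxM
      have hxM' : M < x := lt_of_le_of_ne hxM (fun h => hMt (h ▸ hx))
      have hxs : x ∉ s := fun hxs => absurd (le_max' s x hxs) (not_le.2 hxM')
      obtain ⟨b, hbs, hbt, hxb⟩ := toColex_le_toColex.1 hle hx hxs
      exact absurd (le_trans hxb (le_max' s b hbs)) (not_le.2 hxM')
    · rintro ⟨hsub, hcard⟩
      have hlt : ∀ x ∈ t, x < M := fun x hx => mem_Iio.1 (hsub hx)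
      refine ⟨⟨hcard.symm, ?_⟩, fun hMt => lt_irrefl M (hlt M hMt)⟩
      rw [toColex_le_toColex]
      intro x hxt hxs
      exact ⟨M, max'_mem s hs, fun hMt => lt_irrefl M (hlt M hMt), (hlt x hxt).le⟩
  have h2 : {t ∈ initSeg s | M ∈ t} = (initSeg (s.erase M)).image (insert M) := by
    ext u
    simp only [mem_filter, mem_initSeg, mem_image]
    constructor
    · rintro ⟨⟨hcard, hle⟩, hMu⟩
      refine ⟨u.erase M, ⟨?_, ?_⟩, insert_erase hMu⟩
      · rw [card_erase_of_mem hMu, card_erase_of_mem (max'_mem s hs), hcard]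
      · rw [erase_eq, erase_eq]
        exact (toColex_sdiff_le_toColex_sdiff (singleton_subset_iff.2 hMu)
          (singleton_subset_iff.2 (max'_mem s hs))).2 hle
    · rintro ⟨t, ⟨hcard, hle⟩, rfl⟩
      have hlt : ∀ x ∈ t, x < M := forall_lt_of_le_erase_max hs hle
      have hMt : M ∉ t := fun h => lt_irrefl M (hlt M h)
      have hcard2 : #s = #(insert M t) := by
        rw [card_insert_of_notMem hMt, ← hcard, card_erase_of_mem (max'_mem s hs)]
        have := card_pos.2 hs
        omega
      refine ⟨⟨hcard2, ?_⟩, mem_insert_self M t⟩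
      rw [← toColex_sdiff_le_toColex_sdiff (singleton_subset_iff.2 (mem_insert_self M t))
        (singleton_subset_iff.2 (max'_mem s hs)), ← erase_eq, ← erase_eq, erase_insert hMt]
      exact hle
  have h2card : #{t ∈ initSeg s | M ∈ t} = #(initSeg (s.erase M)) := by
    rw [h2]
    apply card_image_of_injOn
    intro t1 h1' t2 h2' heq
    have hM1 : M ∉ t1 := fun h => lt_irrefl M
      (forall_lt_of_le_erase_max hs (mem_initSeg.1 (mem_coe.1 h1')).2 M h)
    have hM2 : M ∉ t2 := fun h => lt_irrefl M
      (forall_lt_of_le_erase_max hs (mem_initSeg.1 (mem_coe.1 h2')).2 M h)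
    rw [← erase_insert hM1, ← erase_insert hM2, heq]
  have h1card : #{t ∈ initSeg s | M ∉ t} = Nat.choose ((M : Fin n) : ℕ) #s := by
    rw [h1, card_powersetCard, Fin.card_Iio]
  omega
end Count

section Run
variable {n : ℕ}

def runSet (n M j : ℕ) : Finset (Fin n) :=
  Finset.univ.filter (fun x : Fin n => M - j ≤ x.val ∧ x.val < M)

lemma mem_runSet {M j : ℕ} {x : Fin n} : x ∈ runSet n M j ↔ M - j ≤ x.val ∧ x.val < M := by
  simp [runSet]

lemma runSet_card {M j : ℕ} (hjM : j ≤ M) (hMn : M ≤ n) : #(runSet n M j) = j := by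
  have h := Finset.card_nbij (i := fun x : Fin n => (x : ℕ)) (s := runSet n M j)
    (t := Finset.Ico (M - j) M)
    (fun x hx => by rw [Finset.mem_coe, mem_runSet] at hx; exact Finset.mem_coe.2 (Finset.mem_Ico.2 hx))
    (fun x hx1 x2 hx2 heq => Fin.val_injective heq)
    (fun y hy => by
      rw [Finset.mem_coe, Finset.mem_Ico] at hy
      exact ⟨⟨y, lt_of_lt_of_le hy.2 hMn⟩,
        ⟨Finset.mem_coe.2 (mem_runSet.2 ⟨hy.1, hy.2⟩), rfl⟩⟩)
  rw [h, Nat.card_Ico]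
  omega

lemma runSet_zero {M : ℕ} : runSet n M 0 = ∅ := by
  ext x; simp only [mem_runSet, Finset.notMem_empty, iff_false]; omega

lemma runSet_max' {M j : ℕ} (hj : 1 ≤ j) (hjM : j ≤ M) (hMn : M ≤ n)
    (h : (runSet n M j).Nonempty) :
    (runSet n M j).max' h = ⟨M - 1, by omega⟩ := by
  apply le_antisymm
  · apply Finset.max'_le
    intro x hx
    rw [mem_runSet] at hx
    exact Fin.le_def.mpr (show x.val ≤ M - 1 by omega)
  · exact Finset.le_max' _ _ (mem_runSet.2 ⟨show M - j ≤ M - 1 by omega, show M - 1 < M by omega⟩)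

lemma runSet_nonempty {M j : ℕ} (hj : 1 ≤ j) (hjM : j ≤ M) (hMn : M ≤ n) :
    (runSet n M j).Nonempty :=
  ⟨⟨M - 1, by omega⟩, mem_runSet.2 ⟨show M - j ≤ M - 1 by omega, show M - 1 < M by omega⟩⟩

lemma runSet_erase_max {M j : ℕ} (hj : 1 ≤ j) (hjM : j ≤ M) (hMn : M ≤ n) :
    (runSet n M j).erase ⟨M - 1, by omega⟩ = runSet n (M - 1) (j - 1) := by
  ext x
  rw [Finset.mem_erase, mem_runSet, mem_runSet]
  constructor
  · rintro ⟨hne, h1, h2⟩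
    have : (x : ℕ) ≠ M - 1 := fun h => hne (Fin.ext h)
    omega
  · rintro ⟨h1, h2⟩
    refine ⟨fun h => ?_, by omega, by omega⟩
    rw [Fin.ext_iff] at h
    simp at h
    omega

lemma runSet_erase_min {M j : ℕ} (hj : 1 ≤ j) (hjM : j ≤ M) (hMn : M ≤ n)
    (h : (runSet n M j).Nonempty) :
    (runSet n M j).erase ((runSet n M j).min' h) = runSet n M (j - 1) := by
  have hmin : (runSet n M j).min' h = ⟨M - j, by omega⟩ := by
    apply le_antisymm
    · exact Finset.min'_le _ _ (mem_runSet.2 ⟨show M - j ≤ M - j by omega, show M - j < M by omega⟩)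
    · apply Finset.le_min'
      intro x hx
      rw [mem_runSet] at hx
      exact Fin.le_def.mpr (show M - j ≤ x.val by omega)
  rw [hmin]
  ext x
  rw [Finset.mem_erase, mem_runSet, mem_runSet]
  constructor
  · rintro ⟨hne, h1, h2⟩
    have : (x : ℕ) ≠ M - j := fun hh => hne (Fin.ext hh)
    omega
  · rintro ⟨h1, h2⟩
    refine ⟨fun hh => ?_, by omega, by omega⟩
    rw [Fin.ext_iff] at hh
    simp at hh
    omega

lemma initSeg_runSet_card : ∀ (j M : ℕ), j ≤ M → M ≤ n →
    #(initSeg (runSet n M j)) = M.choose j := by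
  intro j
  induction j with
  | zero => intro M _ _; rw [runSet_zero, initSeg_empty_card, Nat.choose_zero_right]
  | succ j ih =>
    intro M hjM hMn
    have hne := runSet_nonempty (n := n) (j := j + 1) (M := M) (by omega) hjM hMn
    rw [card_initSeg_rec _ hne, runSet_card hjM hMn]
    rw [runSet_max' (by omega) hjM hMn hne]
    have herase := runSet_erase_max (n := n) (j := j+1) (M := M) (by omega) hjM hMn
    simp only [Nat.add_sub_cancel] at herase
    rw [herase, ih (M - 1) (by omega) (by omega)]
    have hval : ((⟨M - 1, show M - 1 < n by omega⟩ : Fin n) : ℕ) = M - 1 := rfl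
    rw [hval]
    conv_rhs => rw [show M = (M - 1) + 1 by omega]
    rw [Nat.choose_succ_succ]
    simp only [Nat.succ_eq_add_one]
    omega
end Run

section CB

lemma C_eval {x j : ℤ} (hj : 0 ≤ j) (hx : 0 ≤ x) : C x j = (x.toNat.choose j.toNat : ℤ) := by
  simp [C, hj, hx]

lemma C_cast_choose (x : ℤ) (j : ℕ) (hx : 0 ≤ x) : C x (j : ℤ) = (x.toNat.choose j : ℤ) := by
  rw [C_eval (by positivity) hx, Int.toNat_natCast]

lemma C_nonneg_s19 {x j : ℤ} (h : j ≤ x) : 0 ≤ C x j := by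
  by_cases hj : 0 ≤ j
  · rw [C_eval hj (le_trans hj h)]; positivity
  · simp [C, hj]

lemma C_pos {x j : ℤ} (hj : 0 ≤ j) (h : j ≤ x) : 1 ≤ C x j := by
  rw [C_eval hj (le_trans hj h)]
  exact_mod_cast Nat.succ_le_of_lt (Nat.choose_pos (Int.toNat_le_toNat h))

lemma B_nonneg_s19 : ∀ (xs : List ℤ) (j : ℤ), (∀ i < xs.length, j - (i : ℤ) ≤ xs.getD i 0) →
    0 ≤ B xs j := by
  intro xs
  induction xs with
  | nil => intro j _; simp [B]
  | cons x xs ih =>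
    intro j h
    have hx : j ≤ x := by simpa using h 0 (Nat.succ_pos _)
    have ht : 0 ≤ B xs (j - 1) := by
      refine ih (j - 1) (fun i hi => ?_)
      have := h (i + 1) (by simpa using Nat.succ_lt_succ hi)
      rw [List.getD_cons_succ] at this
      push_cast at this ⊢
      linarith
    have := C_nonneg_s19 hx
    simp only [B]
    linarith

end CB

section Main
open Finset Finset.Colex

lemma mainLemma : ∀ (a : List ℤ) (k n : ℕ), 1 ≤ k → IsKBinomSeq k a → a ≠ [] →
    a.headI ≤ (n : ℤ) → (a.tail ≠ [] → a.headI < (n : ℤ)) →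
    ∃ s : Finset (Fin n), #s = k ∧ (∀ x ∈ s, ((x : ℕ) : ℤ) ≤ a.headI) ∧
      ((#(initSeg s) : ℤ) = B a (k : ℤ)) ∧
      ∀ (hs : s.Nonempty), ((#(initSeg (s.erase (s.min' hs))) : ℤ) = B a ((k : ℤ) - 1)) := by
  intro a
  induction a with
  | nil => intro k n _ _ hne; exact absurd rfl hne
  | cons a0 rest ih =>
    intro k n hk hseq hne hhead1 hhead2
    obtain ⟨hchain, hlen, hentry⟩ := hseq
    have ha0k : (k : ℤ) ≤ a0 := by simpa using hentry 0 (Nat.succ_pos _)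
    have ha00 : (0 : ℤ) ≤ a0 := le_trans (by exact_mod_cast Nat.zero_le k) ha0k
    simp only [List.headI_cons] at hhead1 hhead2
    rcases rest with _ | ⟨b, rest'⟩
    · -- base case: a = [a0]
      set M := a0.toNat with hM
      have hMa0 : (M : ℤ) = a0 := Int.toNat_of_nonneg ha00
      have hMk : k ≤ M := by omega
      have hMn : M ≤ n := by omega
      refine ⟨runSet n M k, runSet_card hMk hMn, ?_, ?_, ?_⟩
      · intro x hx
        rw [mem_runSet] at hx
        simp only [List.headI_cons]
        omega
      · rw [initSeg_runSet_card k M hMk hMn]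
        simp only [B, C_cast_choose a0 k ha00]
        ring
      · intro hs
        rw [runSet_erase_min hk hMk hMn hs, initSeg_runSet_card (k - 1) M (by omega) hMn]
        have hcast : ((k : ℤ) - 1) = ((k - 1 : ℕ) : ℤ) := by omega
        simp only [B, hcast, C_cast_choose a0 (k - 1) ha00]
        ring
    · -- recursive case: a = a0 :: b :: rest'
      have hchain' := List.isChain_cons_cons.1 hchain
      have hba : b < a0 := hchain'.1
      have hlen2 : 2 ≤ k := le_trans (by simp) hlen
      have ha0n : a0 < (n : ℤ) := hhead2 (by simp)
      have hseq' : IsKBinomSeq (k - 1) (b :: rest') := by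
        refine ⟨hchain'.2, by simp at hlen ⊢; omega, fun i hi => ?_⟩
        have := hentry (i + 1) (by simpa using Nat.succ_lt_succ hi)
        rw [List.getD_cons_succ] at this
        have hc : (((k : ℕ) - 1 : ℕ) : ℤ) = (k : ℤ) - 1 := by omega
        rw [hc]
        push_cast at this ⊢
        linarith
      obtain ⟨s', hcard', hbound', hcount1', hcount2'⟩ :=
        ih (k - 1) n (by omega) hseq' (by simp)
          (by simp only [List.headI_cons]; omega)
          (fun _ => by simp only [List.headI_cons]; omega)
      simp only [List.headI_cons] at hbound'
      have ha0nn : a0.toNat < n := by omega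
      set A : Fin n := ⟨a0.toNat, ha0nn⟩ with hA
      have hAval : ((A : ℕ) : ℤ) = a0 := by
        simp only [hA]
        exact Int.toNat_of_nonneg ha00
      have hltA : ∀ x ∈ s', x < A := by
        intro x hx
        have := hbound' x hx
        rw [Fin.lt_def]
        simp only [hA]
        omega
      have hAnot : A ∉ s' := fun h => absurd rfl (ne_of_lt (hltA A h))
      have hs'ne : s'.Nonempty := card_pos.1 (by omega)
      have hcardins : #(insert A s') = k := by
        rw [card_insert_of_notMem hAnot, hcard']; omega
      have hinsne : (insert A s').Nonempty := insert_nonempty _ _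
      have hmax : (insert A s').max' hinsne = A := by
        apply le_antisymm
        · exact max'_le _ _ _ (fun x hx => by
            rcases mem_insert.1 hx with rfl | hx'
            · exact le_refl _
            · exact (hltA x hx').le)
        · exact le_max' _ _ (mem_insert_self A s')
      have hkcast : (((k : ℕ) - 1 : ℕ) : ℤ) = (k : ℤ) - 1 := by omega
      refine ⟨insert A s', hcardins, ?_, ?_, ?_⟩
      · intro x hx
        simp only [List.headI_cons]
        rcases mem_insert.1 hx with rfl | hx'
        · omega
        · have := hbound' x hx'
          omega
      · rw [card_initSeg_rec _ hinsne, hmax, erase_insert hAnot, hcardins]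
        push_cast
        rw [hcount1', hkcast]
        simp only [B]
        rw [C_cast_choose a0 k ha00]
      · intro hs
        have hminA : s'.min' hs'ne < A := hltA _ (min'_mem _ _)
        have hmin2 : (insert A s').min' hs = s'.min' hs'ne := by
          apply le_antisymm
          · exact min'_le _ _ (mem_insert_of_mem (min'_mem _ _))
          · apply le_min'
            intro y hy
            rcases mem_insert.1 hy with rfl | hy'
            · exact hminA.le
            · exact min'_le _ _ hy' 
        rw [hmin2, erase_insert_of_ne (ne_of_gt hminA)]
        set t := insert A (s'.erase (s'.min' hs'ne)) with ht
        have hAnot2 : A ∉ s'.erase (s'.min' hs'ne) := fun h => hAnot (mem_of_mem_erase h)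
        have htne : t.Nonempty := insert_nonempty _ _
        have hmaxt : t.max' htne = A := by
          apply le_antisymm
          · exact max'_le _ _ _ (fun x hx => by
              rcases mem_insert.1 hx with rfl | hx'
              · exact le_refl _
              · exact (hltA x (mem_of_mem_erase hx')).le)
          · exact le_max' _ _ (mem_insert_self _ _)
        have hcardt : #t = k - 1 := by
          rw [ht, card_insert_of_notMem hAnot2,
            card_erase_of_mem (min'_mem _ _), hcard']
          omega
        rw [card_initSeg_rec _ htne, hmaxt, hcardt]
        rw [ht, erase_insert hAnot2]
        push_cast
        rw [hcount2' hs'ne, hkcast]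
        simp only [B]
        have hc2 : ((k : ℤ) - 1) = ((k - 1 : ℕ) : ℤ) := by omega
        rw [hc2, C_cast_choose a0 (k - 1) ha00]
end Main

/-- The colex initial segment is extremal: `|Δ(I_{n,k}(m))| = B(a, k-1)`. -/
theorem colexInit_is_extremal
    (n k : ℕ) (hk : 1 ≤ k) (hkn : k ≤ n)
    (m : ℕ) (hm : 0 < m) (hmn : m ≤ n.choose k)
    (a : List ℤ) (ha : IsKBinom k (m : ℤ) a) :
    ((Finset.shadow (colexInit n k m)).card : ℤ) = B a ((k : ℤ) - 1) := by
  classical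
  obtain ⟨⟨hchain, hlen, hentry⟩, hmB⟩ := ha
  have hane : a ≠ [] := by
    rintro rfl
    simp only [B] at hmB
    omega
  obtain ⟨a0, rest, rfl⟩ : ∃ a0 rest, a = a0 :: rest := by
    cases a with
    | nil => exact absurd rfl hane
    | cons x xs => exact ⟨x, xs, rfl⟩
  have ha0k : (k : ℤ) ≤ a0 := by simpa using hentry 0 (Nat.succ_pos _)
  have ha00 : (0 : ℤ) ≤ a0 := le_trans (by exact_mod_cast Nat.zero_le k) ha0k
  have hrest_nonneg : 0 ≤ B rest ((k : ℤ) - 1) := by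
    refine B_nonneg_s19 rest _ (fun i hi => ?_)
    have := hentry (i + 1) (by simpa using Nat.succ_lt_succ hi)
    rw [List.getD_cons_succ] at this
    push_cast at this ⊢
    linarith
  have hmB' : (m : ℤ) = C a0 (k : ℤ) + B rest ((k : ℤ) - 1) := by simpa [B] using hmB
  have hCa0 : C a0 (k : ℤ) = (a0.toNat.choose k : ℤ) := C_cast_choose a0 k ha00
  have hsucc : (n + 1).choose k = n.choose (k - 1) + n.choose k := by
    conv_lhs => rw [show k = (k - 1) + 1 by omega]
    rw [Nat.choose_succ_succ, Nat.succ_eq_add_one, show k - 1 + 1 = k by omega]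
  have ha0n : a0 ≤ (n : ℤ) := by
    by_contra h
    push_neg at h
    have h2 : (n + 1).choose k ≤ a0.toNat.choose k := Nat.choose_le_choose k (by omega)
    have h4 : 0 < n.choose (k - 1) := Nat.choose_pos (by omega)
    have h5 : ((a0.toNat.choose k : ℕ) : ℤ) ≤ (m : ℤ) := by
      rw [hmB', hCa0]; linarith
    have h6 : a0.toNat.choose k ≤ m := by exact_mod_cast h5
    omega
  have ha0n2 : rest ≠ [] → a0 < (n : ℤ) := by
    intro hrne
    rcases rest with _ | ⟨b, rest'⟩
    · exact absurd rfl hrne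
    by_contra h
    push_neg at h
    have ha0eq : a0 = (n : ℤ) := le_antisymm ha0n h
    have hbk : (k : ℤ) - 1 ≤ b := by
      have := hentry 1 (by simp)
      rw [List.getD_cons_succ, List.getD_cons_zero] at this
      push_cast at this
      linarith
    have h1 : 1 ≤ C b ((k : ℤ) - 1) := C_pos (by omega) hbk
    have h2 : 0 ≤ B rest' ((k : ℤ) - 1 - 1) := by
      refine B_nonneg_s19 rest' _ (fun i hi => ?_)
      have := hentry (i + 2) (by simp; omega)
      rw [List.getD_cons_succ, List.getD_cons_succ] at this
      push_cast at this ⊢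
      linarith
    have hb : 1 ≤ B (b :: rest') ((k : ℤ) - 1) := by
      simp only [B]; linarith
    have hCnk : C a0 (k : ℤ) = (n.choose k : ℤ) := by
      rw [ha0eq, C_cast_choose _ k (by positivity), Int.toNat_natCast]
    have hmle : (m : ℤ) ≤ (n.choose k : ℤ) := by exact_mod_cast hmn
    rw [hmB', hCnk] at hmle
    linarith
  obtain ⟨s, hcards, hbound, hcount1, hcount2⟩ :=
    mainLemma (a0 :: rest) k n hk ⟨hchain, hlen, hentry⟩ (by simp)
      (by simpa using ha0n)
      (fun h => by simpa using ha0n2 (by simpa using h))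
  have hsne : s.Nonempty := card_pos.1 (by omega)
  have hm_initSeg : #(initSeg s) = m := by
    have : (#(initSeg s) : ℤ) = (m : ℤ) := by rw [hcount1, ← hmB]
    exact_mod_cast this
  have hfilter_eq : ∀ X : Finset (Fin n), #X = k →
      (@Finset.filter _ (fun Y => colexLE Y X) (Classical.decPred _)
        (Finset.powersetCard k (Finset.univ : Finset (Fin n)))) = initSeg X := by
    intro X hX
    ext Y
    rw [mem_filter, mem_initSeg, mem_powersetCard_univ]
    rw [colexLE_iff, hX]
    constructor
    · rintro ⟨h1, h2⟩; exact ⟨h1.symm, h2⟩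
    · rintro ⟨h1, h2⟩; exact ⟨h1.symm, h2⟩
  have hmono : ∀ X : Finset (Fin n), #X = k →
      (#(initSeg X) ≤ m ↔ toColex X ≤ toColex s) := by
    intro X hX
    constructor
    · intro hle
      by_contra hnot
      have hlt : toColex s < toColex X := not_le.1 hnot
      have hsub : initSeg s ⊆ initSeg X := by
        intro t htt
        rw [mem_initSeg] at htt ⊢
        refine ⟨by omega, le_trans htt.2 hlt.le⟩
      have hXmem : X ∈ initSeg X := mem_initSeg_self
      have hXnot : X ∉ initSeg s := fun hh => absurd (mem_initSeg.1 hh).2 (not_le.2 hlt)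
      have : #(initSeg s) < #(initSeg X) :=
        card_lt_card (Finset.ssubset_def.2 ⟨hsub, fun hh => hXnot (hh hXmem)⟩)
      omega
    · intro hle
      have hsub : initSeg X ⊆ initSeg s := by
        intro t htt
        rw [mem_initSeg] at htt ⊢
        refine ⟨by omega, le_trans htt.2 hle⟩
      calc #(initSeg X) ≤ #(initSeg s) := card_le_card hsub
        _ = m := hm_initSeg
  have key : colexInit n k m = initSeg s := by
    ext X
    unfold colexInit
    rw [@Finset.mem_filter _ _ (Classical.decPred _) _ _, mem_powersetCard_univ, mem_initSeg]
    constructor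
    · rintro ⟨hX, hcard⟩
      rw [hfilter_eq X hX] at hcard
      exact ⟨by omega, (hmono X hX).1 hcard⟩
    · rintro ⟨hcard, hle⟩
      have hX : #X = k := by omega
      refine ⟨hX, ?_⟩
      rw [hfilter_eq X hX]
      exact (hmono X hX).2 hle
  have hinst : (instDecidableEqFin n) = (fun a b => LinearOrder.toDecidableEq a b) := by
    funext x y
    exact Subsingleton.elim _ _
  have hshadow : Finset.shadow (colexInit n k m) = initSeg (s.erase (s.min' hsne)) := by
    rw [key, hinst]
    exact Finset.Colex.shadow_initSeg hsne
  rw [hshadow]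
  exact hcount2 hsne
end
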